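/- If X ∼_T Y then λX ∼_T μY for all λ, μ > 0. -/

import Mathlib

/-- Lemma 3(i) of Lieb–Yngvason: if X ∼_T Y then λX ∼_T μY for all λ, μ > 0.
Here X ∼_T Y means (X,Y) ∼ θ(X,Y) with θ(X,Y) = (U_X + U_Y, V_X, V_Y), and
λ(U,V) = (λU, λV). -/
theorem thermal_equilibrium_scaling
    {St : Type*} {W : Type*} [AddCommGroup W] [Module ℝ W]
    (prec : St → St → Prop)
    (comp : St → St → St) (scale : ℝ → St → St)
    (comp_comm : ∀ X Y, comp X Y = comp Y X)
    (comp_assoc : ∀ X Y Z, comp (comp X Y) Z = comp X (comp Y Z))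
    (scale_one : ∀ X, scale 1 X = X)
    (scale_scale : ∀ (a b : ℝ) (X : St), 0 < a → 0 < b →
      scale a (scale b X) = scale (a * b) X)
    (scale_comp : ∀ (a : ℝ) (X Y : St), 0 < a →
      scale a (comp X Y) = comp (scale a X) (scale a Y))
    (A1 : ∀ X, prec X X)
    (A2 : ∀ X Y Z, prec X Y → prec Y Z → prec X Z)
    (A3 : ∀ X Xp Y Yp, prec X Xp → prec Y Yp → prec (comp X Y) (comp Xp Yp))
    (A4 : ∀ (l : ℝ) (X Y : St), 0 < l → prec X Y → prec (scale l X) (scale l Y))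
    (A5 : ∀ (l : ℝ) (X : St), 0 < l → l < 1 →
      prec X (comp (scale (1 - l) X) (scale l X)) ∧
      prec (comp (scale (1 - l) X) (scale l X)) X)
    (A6 : ∀ (X Y Z₀ Z₁ : St) (ε : ℕ → ℝ), (∀ n, 0 < ε n) →
      Filter.Tendsto ε Filter.atTop (nhds 0) →
      (∀ n, prec (comp X (scale (ε n) Z₀)) (comp Y (scale (ε n) Z₁))) →
      prec X Y)
    (ι : ℝ × W → St) (ιΔ : ℝ × W × W → St)
    (hscale : ∀ (t : ℝ) (X : ℝ × W), 0 < t → scale t (ι X) = ι (t • X))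
    (A7 : ∀ (t : ℝ) (X Y : ℝ × W), 0 < t → t < 1 →
      prec (comp (scale t (ι X)) (scale (1 - t) (ι Y))) (ι (t • X + (1 - t) • Y)))
    (A11 : ∀ X Y : ℝ × W,
      prec (comp (ι X) (ι Y)) (ιΔ (X.1 + Y.1, X.2, Y.2)))
    (A12 : ∀ (U : ℝ) (V₁ V₂ : W), ∃ U₁ U₂ : ℝ, U₁ + U₂ = U ∧
      prec (ιΔ (U, V₁, V₂)) (comp (ι (U₁, V₁)) (ι (U₂, V₂))) ∧
      prec (comp (ι (U₁, V₁)) (ι (U₂, V₂))) (ιΔ (U, V₁, V₂)))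
    -- A13, the zeroth law: thermal equilibrium is transitive
    (A13 : ∀ X Z Y : ℝ × W,
      (prec (comp (ι X) (ι Z)) (ιΔ (X.1 + Z.1, X.2, Z.2)) ∧
       prec (ιΔ (X.1 + Z.1, X.2, Z.2)) (comp (ι X) (ι Z))) →
      (prec (comp (ι Z) (ι Y)) (ιΔ (Z.1 + Y.1, Z.2, Y.2)) ∧
       prec (ιΔ (Z.1 + Y.1, Z.2, Y.2)) (comp (ι Z) (ι Y))) →
      (prec (comp (ι X) (ι Y)) (ιΔ (X.1 + Y.1, X.2, Y.2)) ∧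
       prec (ιΔ (X.1 + Y.1, X.2, Y.2)) (comp (ι X) (ι Y)))) :
    ∀ (X Y : ℝ × W) (l m : ℝ), 0 < l → 0 < m →
      (prec (comp (ι X) (ι Y)) (ιΔ (X.1 + Y.1, X.2, Y.2)) ∧
       prec (ιΔ (X.1 + Y.1, X.2, Y.2)) (comp (ι X) (ι Y))) →
      (prec (comp (ι (l • X)) (ι (m • Y)))
         (ιΔ ((l • X).1 + (m • Y).1, (l • X).2, (m • Y).2)) ∧
       prec (ιΔ ((l • X).1 + (m • Y).1, (l • X).2, (m • Y).2))
         (comp (ι (l • X)) (ι (m • Y)))) := by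

  intro X Y l m hl hm hXY
  -- Key lemma: a • Z ∼_T Z for all a > 0
  have key : ∀ (Z : ℝ × W) (a : ℝ), 0 < a →
      (prec (comp (ι (a • Z)) (ι Z)) (ιΔ ((a • Z).1 + Z.1, (a • Z).2, Z.2)) ∧
       prec (ιΔ ((a • Z).1 + Z.1, (a • Z).2, Z.2)) (comp (ι (a • Z)) (ι Z))) := by
    intro Z a ha
    refine ⟨A11 _ _, ?_⟩
    obtain ⟨U₁, U₂, hsum, h1, h2⟩ := A12 ((a • Z).1 + Z.1) (a • Z).2 Z.2
    have h1a : (0:ℝ) < 1 + a := by linarith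
    set t : ℝ := a / (1 + a) with ht
    have ht0 : 0 < t := div_pos ha h1a
    have ht1 : t < 1 := by rw [ht, div_lt_one h1a]; linarith
    have hs0 : (0:ℝ) < 1 / (1 + a) := by positivity
    set A : ℝ × W := (U₁ / a, Z.2) with hA
    set B : ℝ × W := (U₂, Z.2) with hB
    have hsum' : U₁ + U₂ = a * Z.1 + Z.1 := by
      simpa [Prod.smul_fst, smul_eq_mul] using hsum
    have hsmall : prec (scale (1 / (1 + a)) (comp (ι (U₁, (a • Z).2)) (ι (U₂, Z.2)))) (ι Z) := by
      rw [scale_comp _ _ _ hs0, hscale _ _ hs0, hscale _ _ hs0]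
      have eA : (1 / (1 + a)) • ((U₁, (a • Z).2) : ℝ × W) = t • A := by
        refine Prod.ext ?_ ?_
        · simp only [Prod.smul_fst, smul_eq_mul, hA, ht]
          field_simp
        · simp only [Prod.smul_snd, hA, ht, smul_smul]
          congr 1
          field_simp
      have eB : (1 / (1 + a)) • ((U₂, Z.2) : ℝ × W) = (1 - t) • B := by
        refine Prod.ext ?_ ?_
        · simp only [Prod.smul_fst, smul_eq_mul, hB, ht]
          field_simp
          ring
        · simp only [Prod.smul_snd, hB, ht]
          congr 1
          field_simp
          ring
      have eC : t • A + (1 - t) • B = Z := by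
        refine Prod.ext ?_ ?_
        · simp only [Prod.fst_add, Prod.smul_fst, smul_eq_mul, hA, hB, ht]
          field_simp
          linear_combination hsum'
        · simp only [Prod.snd_add, Prod.smul_snd, hA, hB]
          rw [← add_smul]
          norm_num
      rw [eA, eB]
      have h7 := A7 t A B ht0 ht1
      rw [hscale t A ht0, hscale (1 - t) B (by linarith)] at h7
      rwa [eC] at h7
    have hbig : prec (comp (ι (U₁, (a • Z).2)) (ι (U₂, Z.2))) (scale (1 + a) (ι Z)) := by
      have h4 := A4 (1 + a) _ _ h1a hsmall
      rwa [scale_scale _ _ _ h1a hs0, show (1 + a) * (1 / (1 + a)) = 1 by field_simp,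
        scale_one] at h4
    have hsplit : prec (scale (1 + a) (ι Z)) (comp (ι (a • Z)) (ι Z)) := by
      have h5 := (A5 t (scale (1 + a) (ι Z)) ht0 ht1).1
      rw [scale_scale _ _ _ (by linarith : (0:ℝ) < 1 - t) h1a,
        scale_scale _ _ _ ht0 h1a,
        show (1 - t) * (1 + a) = 1 by rw [ht]; field_simp; ring,
        show t * (1 + a) = a by rw [ht]; field_simp,
        scale_one, hscale a _ ha, comp_comm] at h5
      exact h5
    exact A2 _ _ _ h1 (A2 _ _ _ hbig hsplit)
  -- Symmetry of ∼_T
  have symmT : ∀ A B : ℝ × W,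
      (prec (comp (ι A) (ι B)) (ιΔ (A.1 + B.1, A.2, B.2)) ∧
       prec (ιΔ (A.1 + B.1, A.2, B.2)) (comp (ι A) (ι B))) →
      (prec (comp (ι B) (ι A)) (ιΔ (B.1 + A.1, B.2, A.2)) ∧
       prec (ιΔ (B.1 + A.1, B.2, A.2)) (comp (ι B) (ι A))) := by
    intro A B hAB
    refine ⟨A11 _ _, ?_⟩
    obtain ⟨U₁, U₂, hsum, h1, h2⟩ := A12 (B.1 + A.1) B.2 A.2
    have h3 : prec (comp (ι (U₁, B.2)) (ι (U₂, A.2))) (ιΔ (A.1 + B.1, A.2, B.2)) := by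
      rw [comp_comm]
      have h11 := A11 ((U₂, A.2) : ℝ × W) ((U₁, B.2) : ℝ × W)
      have e : U₂ + U₁ = A.1 + B.1 := by linarith
      rw [← e]
      exact h11
    have h4 : prec (ιΔ (A.1 + B.1, A.2, B.2)) (comp (ι B) (ι A)) := by
      rw [comp_comm]
      exact hAB.2
    exact A2 _ _ _ h1 (A2 _ _ _ h3 h4)
  exact A13 (l • X) X (m • Y) (key X l hl) (A13 X Y (m • Y) hXY (symmT _ _ (key Y m hm)))
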